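/- Let n ≥ 6 and let C_n be the cycle graph on n vertices. Then: (i) for any two vertices u, v of C_n, the graphs C_n*u and C_n*v are isomorphic; (ii) for any vertex v, C_n*v is not isomorphic to C_n; and (iii) every graph that is Seidel complement equivalent to C_n is isomorphic either to C_n or to C_n*v (for any fixed vertex v). In other words, the Seidel complement equivalence class of C_n consists of exactly two isomorphism classes. -/

import Mathlib

set_option maxHeartbeats 1000000


universe u

/-- The Seidel complement of `G` at `v`: adjacency between the open neighborhood of `v`
and the set of vertices different from `v` and not adjacent to `v` is complemented,
all other adjacencies are unchanged. -/
def seidelCompl {V : Type u} (G : SimpleGraph V) (v : V) : SimpleGraph V where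
  Adj x y := x ≠ y ∧
    Xor' (G.Adj x y)
      ((G.Adj v x ∧ ¬ G.Adj v y ∧ y ≠ v) ∨ (G.Adj v y ∧ ¬ G.Adj v x ∧ x ≠ v))
  symm := ⟨by
    rintro x y ⟨hxy, h⟩
    refine ⟨hxy.symm, ?_⟩
    have h1 : G.Adj x y ↔ G.Adj y x := G.adj_comm x y
    unfold Xor' at h ⊢
    unfold Xor at h ⊢
    tauto⟩
  loopless := ⟨fun x h => h.1 rfl⟩

/-- `G` and `H` are Seidel complement equivalent: some finite sequence of Seidel
complementations applied to `G` yields a graph isomorphic to `H`. -/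
def SeidelEquiv {V W : Type u} (G : SimpleGraph V) (H : SimpleGraph W) : Prop :=
  ∃ l : List V, Nonempty ((l.foldl seidelCompl G) ≃g H)

section Lemmas

variable {V : Type u} {W : Type u}

lemma seidelCompl_adj (G : SimpleGraph V) (v x y : V) :
    (seidelCompl G v).Adj x y ↔ x ≠ y ∧
    Xor' (G.Adj x y)
      ((G.Adj v x ∧ ¬ G.Adj v y ∧ y ≠ v) ∨ (G.Adj v y ∧ ¬ G.Adj v x ∧ x ≠ v)) := Iff.rfl

lemma seidelCompl_adj_base (G : SimpleGraph V) (v x : V) :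
    (seidelCompl G v).Adj v x ↔ G.Adj v x := by
  simp only [seidelCompl_adj, Xor', Xor]
  have h1 := G.loopless.irrefl v
  have h2 : G.Adj v x → v ≠ x := G.ne_of_adj
  tauto

lemma seidelCompl_adj_base' (G : SimpleGraph V) (v x : V) :
    (seidelCompl G v).Adj x v ↔ G.Adj x v := by
  rw [(seidelCompl G v).adj_comm, G.adj_comm, seidelCompl_adj_base]

lemma seidelCompl_invol (G : SimpleGraph V) (v : V) :
    seidelCompl (seidelCompl G v) v = G := by
  ext x y
  have e1 : (seidelCompl G v).Adj v x ↔ G.Adj v x := seidelCompl_adj_base ..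
  have e2 : (seidelCompl G v).Adj v y ↔ G.Adj v y := seidelCompl_adj_base ..
  rw [seidelCompl_adj, e1, e2, seidelCompl_adj]
  simp only [Xor', Xor]
  have h2 : G.Adj x y → x ≠ y := G.ne_of_adj
  tauto

/-- transport of seidelCompl along an isomorphism -/
def isoSeidel {G : SimpleGraph V} {G' : SimpleGraph W} (e : G ≃g G') (v : V) :
    seidelCompl G v ≃g seidelCompl G' (e v) where
  toEquiv := e.toEquiv
  map_rel_iff' := by
    intro a b
    show (seidelCompl G' (e v)).Adj (e a) (e b) ↔ (seidelCompl G v).Adj a b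
    simp only [seidelCompl_adj, e.map_adj_iff, ne_eq, EmbeddingLike.apply_eq_iff_eq]

/-- pulling back along an equivalence gives an isomorphic graph -/
def comapIso (eqv : V ≃ W) (K : SimpleGraph W) : SimpleGraph.comap ⇑eqv K ≃g K where
  toEquiv := eqv
  map_rel_iff' := Iff.rfl

/-- the key identity: `σ_u (σ_v G)` is the `swap(u,v)`-pullback of `σ_u G` -/
lemma seidelCompl_swap [DecidableEq V] (G : SimpleGraph V) {u v : V} (huv : u ≠ v) :
    seidelCompl (seidelCompl G v) u =
      SimpleGraph.comap (Equiv.swap u v) (seidelCompl G u) := by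
  have hvu : v ≠ u := huv.symm
  have key1 : ∀ y, y ≠ u → y ≠ v →
      ((seidelCompl (seidelCompl G v) u).Adj u y ↔ (seidelCompl G u).Adj v y) := by
    intro y hyu hyv
    have huy : u ≠ y := hyu.symm
    have hvy : v ≠ y := hyv.symm
    rw [seidelCompl_adj_base]
    simp only [seidelCompl_adj, Xor', Xor]
    have c1 : G.Adj v u ↔ G.Adj u v := G.adj_comm v u
    tauto
  have key2 : ∀ y, y ≠ u → y ≠ v →
      ((seidelCompl (seidelCompl G v) u).Adj v y ↔ (seidelCompl G u).Adj u y) := by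
    intro y hyu hyv
    have huy : u ≠ y := hyu.symm
    have hvy : v ≠ y := hyv.symm
    have e1 : (seidelCompl G v).Adj v y ↔ G.Adj v y := seidelCompl_adj_base ..
    have e2 : (seidelCompl G v).Adj u v ↔ G.Adj u v := seidelCompl_adj_base' ..
    rw [seidelCompl_adj_base, seidelCompl_adj, e1, e2]
    simp only [seidelCompl_adj, Xor', Xor]
    have c1 : G.Adj v u ↔ G.Adj u v := G.adj_comm v u
    tauto
  have keyuv : (seidelCompl (seidelCompl G v) u).Adj u v ↔ (seidelCompl G u).Adj v u := by
    rw [seidelCompl_adj_base, seidelCompl_adj_base',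
      (seidelCompl G u).adj_comm, seidelCompl_adj_base, G.adj_comm]
  ext x y
  rw [SimpleGraph.comap_adj]
  by_cases hxu : x = u
  · rw [hxu]
    by_cases hyu : y = u
    · rw [hyu]; simp [SimpleGraph.irrefl]
    by_cases hyv : y = v
    · rw [hyv, Equiv.swap_apply_left, Equiv.swap_apply_right]; exact keyuv
    · rw [Equiv.swap_apply_left, Equiv.swap_apply_of_ne_of_ne hyu hyv]
      exact key1 y hyu hyv
  by_cases hxv : x = v
  · rw [hxv]
    by_cases hyu : y = u
    · rw [hyu, Equiv.swap_apply_left, Equiv.swap_apply_right,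
        (seidelCompl (seidelCompl G v) u).adj_comm, (seidelCompl G u).adj_comm]
      exact keyuv
    by_cases hyv : y = v
    · rw [hyv]; simp [SimpleGraph.irrefl]
    · rw [Equiv.swap_apply_right, Equiv.swap_apply_of_ne_of_ne hyu hyv]
      exact key2 y hyu hyv
  by_cases hyu : y = u
  · rw [hyu, Equiv.swap_apply_left, Equiv.swap_apply_of_ne_of_ne hxu hxv,
      (seidelCompl (seidelCompl G v) u).adj_comm, (seidelCompl G u).adj_comm]
    exact key1 x hxu hxv
  by_cases hyv : y = v
  · rw [hyv, Equiv.swap_apply_right, Equiv.swap_apply_of_ne_of_ne hxu hxv,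
      (seidelCompl (seidelCompl G v) u).adj_comm, (seidelCompl G u).adj_comm]
    exact key2 x hxu hxv
  · rw [Equiv.swap_apply_of_ne_of_ne hxu hxv, Equiv.swap_apply_of_ne_of_ne hyu hyv]
    have c1 : G.Adj v u ↔ G.Adj u v := G.adj_comm v u
    have hux : u ≠ x := Ne.symm hxu
    have hvx : v ≠ x := Ne.symm hxv
    have huy : u ≠ y := Ne.symm hyu
    have hvy : v ≠ y := Ne.symm hyv
    simp only [seidelCompl_adj, Xor', ne_eq]
    by_cases a1 : G.Adj x y <;> by_cases a2 : G.Adj u x <;> by_cases a3 : G.Adj u y <;>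
      by_cases a4 : G.Adj v x <;> by_cases a5 : G.Adj v y <;> by_cases a6 : G.Adj u v <;>
      simp_all

end Lemmas

section Cycle

open SimpleGraph
open Fin.NatCast Fin.CommRing

variable {m : ℕ}

lemma fin_cast_ne_zero {k : ℕ} (h1 : 0 < k) (h2 : k < m + 6) :
    (k : Fin (m+6)) ≠ 0 := by
  intro h
  have := congrArg Fin.val h
  rw [Fin.val_cast_of_lt h2] at this
  simp at this
  omega

/-- rotation automorphism of the cycle -/
def rotIso (m : ℕ) (a : Fin (m+6)) : cycleGraph (m+6) ≃g cycleGraph (m+6) where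
  toEquiv := Equiv.addRight a
  map_rel_iff' := by
    intro x y
    simp only [Equiv.coe_addRight, cycleGraph_adj]
    constructor <;> rintro (h | h)
    · left; linear_combination h
    · right; linear_combination h
    · left; linear_combination h
    · right; linear_combination h

lemma cycle_seidel_iso (u w : Fin (m+6)) :
    Nonempty (seidelCompl (cycleGraph (m+6)) u ≃g seidelCompl (cycleGraph (m+6)) w) := by
  have h : ((rotIso m (w - u)) u) = w := by
    show u + (w - u) = w
    ring
  exact ⟨h ▸ isoSeidel (rotIso m (w - u)) u⟩

lemma cycle_seidel_not_iso (v : Fin (m+6)) :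
    ¬ Nonempty (seidelCompl (cycleGraph (m+6)) v ≃g cycleGraph (m+6)) := by
  rintro ⟨f⟩
  set C := cycleGraph (m+6) with hC
  -- basic cycle adjacency facts
  have hCv1 : C.Adj v (v+1) := by
    rw [hC, cycleGraph_adj]; right; ring
  have hCv3 : ¬ C.Adj v (v+3) := by
    rw [hC, cycleGraph_adj]
    rintro (h | h)
    · exact fin_cast_ne_zero (k := 4) (by omega) (by omega) (by push_cast; linear_combination -h)
    · exact fin_cast_ne_zero (k := 2) (by omega) (by omega) (by push_cast; linear_combination h)
  have hCv4 : ¬ C.Adj v (v+4) := by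
    rw [hC, cycleGraph_adj]
    rintro (h | h)
    · exact fin_cast_ne_zero (k := 5) (by omega) (by omega) (by push_cast; linear_combination -h)
    · exact fin_cast_ne_zero (k := 3) (by omega) (by omega) (by push_cast; linear_combination h)
  have hC13 : ¬ C.Adj (v+1) (v+3) := by
    rw [hC, cycleGraph_adj]
    rintro (h | h)
    · exact fin_cast_ne_zero (k := 3) (by omega) (by omega) (by push_cast; linear_combination -h)
    · exact fin_cast_ne_zero (k := 1) (by omega) (by omega) (by push_cast; linear_combination h)
  have hC14 : ¬ C.Adj (v+1) (v+4) := by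
    rw [hC, cycleGraph_adj]
    rintro (h | h)
    · exact fin_cast_ne_zero (k := 4) (by omega) (by omega) (by push_cast; linear_combination -h)
    · exact fin_cast_ne_zero (k := 2) (by omega) (by omega) (by push_cast; linear_combination h)
  have hd3 : v + 3 ≠ v := fun h =>
    fin_cast_ne_zero (k := 3) (by omega) (by omega) (by push_cast; linear_combination h)
  have hd4 : v + 4 ≠ v := fun h =>
    fin_cast_ne_zero (k := 4) (by omega) (by omega) (by push_cast; linear_combination h)
  have hd34 : v + 3 ≠ v + 4 := fun h =>
    fin_cast_ne_zero (k := 1) (by omega) (by omega) (by push_cast; linear_combination -h)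
  have hd13 : v + 1 ≠ v + 3 := fun h =>
    fin_cast_ne_zero (k := 2) (by omega) (by omega) (by push_cast; linear_combination -h)
  have hd14 : v + 1 ≠ v + 4 := fun h =>
    fin_cast_ne_zero (k := 3) (by omega) (by omega) (by push_cast; linear_combination -h)
  have hd10 : v + 1 ≠ v := fun h =>
    fin_cast_ne_zero (k := 1) (by omega) (by omega) (by push_cast; linear_combination h)
  -- three neighbors of v+1 in the seidel complement
  have A1 : (seidelCompl C v).Adj (v+1) v := by
    rw [(seidelCompl C v).adj_comm, seidelCompl_adj_base]
    exact hCv1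
  have A2 : (seidelCompl C v).Adj (v+1) (v+3) := by
    rw [seidelCompl_adj]
    exact ⟨hd13, Or.inr ⟨Or.inl ⟨hCv1, hCv3, hd3⟩, hC13⟩⟩
  have A3 : (seidelCompl C v).Adj (v+1) (v+4) := by
    rw [seidelCompl_adj]
    exact ⟨hd14, Or.inr ⟨Or.inl ⟨hCv1, hCv4, hd4⟩, hC14⟩⟩
  -- push through f
  have B1 : C.Adj (f (v+1)) (f v) := f.map_adj_iff.mpr A1
  have B2 : C.Adj (f (v+1)) (f (v+3)) := f.map_adj_iff.mpr A2
  have B3 : C.Adj (f (v+1)) (f (v+4)) := f.map_adj_iff.mpr A3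
  have nab : f v ≠ f (v+3) := fun h => hd3 (f.injective h).symm
  have nac : f v ≠ f (v+4) := fun h => hd4 (f.injective h).symm
  have nbc : f (v+3) ≠ f (v+4) := fun h => hd34 (f.injective h)
  set d := f (v+1) with hd
  have P : ∀ z : Fin (m+6), C.Adj d z → z = d + 1 ∨ z = d - 1 := by
    intro z hz
    rw [hC, cycleGraph_adj] at hz
    rcases hz with h | h
    · right; linear_combination -h
    · left; linear_combination h
  rcases P _ B1 with h1 | h1 <;> rcases P _ B2 with h2 | h2 <;> rcases P _ B3 with h3 | h3 <;>
    first
      | exact nab (h1.trans h2.symm)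
      | exact nac (h1.trans h3.symm)
      | exact nbc (h2.trans h3.symm)

lemma cycle_class_closed (m : ℕ) (l : List (Fin (m+6))) :
    ∀ G : SimpleGraph (Fin (m+6)),
      (Nonempty (G ≃g cycleGraph (m+6)) ∨
        ∃ u, Nonempty (G ≃g seidelCompl (cycleGraph (m+6)) u)) →
      (Nonempty (l.foldl seidelCompl G ≃g cycleGraph (m+6)) ∨
        ∃ u, Nonempty (l.foldl seidelCompl G ≃g seidelCompl (cycleGraph (m+6)) u)) := by
  induction l with
  | nil => intro G h; exact h
  | cons w l ih =>
      intro G h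
      rw [List.foldl_cons]
      apply ih
      rcases h with he | ⟨u, he⟩ <;> obtain ⟨e⟩ := he
      · right
        exact ⟨e w, ⟨isoSeidel e w⟩⟩
      · by_cases hw : e w = u
        · left
          have i1 := isoSeidel e w
          rw [hw, seidelCompl_invol] at i1
          exact ⟨i1⟩
        · right
          refine ⟨e w, ?_⟩
          have i1 := isoSeidel e w
          rw [seidelCompl_swap _ hw] at i1
          exact ⟨i1.trans (comapIso (Equiv.swap (e w) u) _)⟩

end Cycle

/-- For `n ≥ 6`, the Seidel complement equivalence class of the cycle `Cₙ` consists of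
exactly two isomorphism classes: (i) all the graphs `Cₙ*u` are pairwise isomorphic,
(ii) `Cₙ*v` is not isomorphic to `Cₙ`, and (iii) every graph Seidel complement
equivalent to `Cₙ` is isomorphic to `Cₙ` or to `Cₙ*v`. -/
theorem cycle_seidel_class (n : ℕ) (hn : 6 ≤ n) :
    (∀ u v : Fin n,
      Nonempty (seidelCompl (SimpleGraph.cycleGraph n) u ≃g
        seidelCompl (SimpleGraph.cycleGraph n) v)) ∧
    (∀ v : Fin n,
      ¬ Nonempty (seidelCompl (SimpleGraph.cycleGraph n) v ≃g SimpleGraph.cycleGraph n)) ∧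
    (∀ (W : Type) (H : SimpleGraph W), SeidelEquiv (SimpleGraph.cycleGraph n) H →
      ∀ v : Fin n, Nonempty (H ≃g SimpleGraph.cycleGraph n) ∨
        Nonempty (H ≃g seidelCompl (SimpleGraph.cycleGraph n) v)) := by
  obtain ⟨m, rfl⟩ : ∃ m, n = m + 6 := ⟨n - 6, by omega⟩
  refine ⟨fun u v => cycle_seidel_iso u v, fun v => cycle_seidel_not_iso v, ?_⟩
  rintro W H ⟨l, ⟨f⟩⟩ v
  rcases cycle_class_closed m l (SimpleGraph.cycleGraph (m+6))
      (Or.inl ⟨RelIso.refl _⟩) with hg | ⟨u, hg⟩ <;> obtain ⟨g⟩ := hg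
  · exact Or.inl ⟨f.symm.trans g⟩
  · obtain ⟨h⟩ := cycle_seidel_iso u v
    exact Or.inr ⟨(f.symm.trans g).trans h⟩
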